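/- In Q_n, for distinct i,j ∉ A, the commutator [z_{A,i}, z_{A,j}] equals ∑_{D : {i,j}⊆D⊆A∪{i,j}} u(D)·(z_{A,i} - z_{A,j}), where u(D) = ∑_{C⊆D} (-1)^{|D|-|C|} r(C). -/

import Mathlib

namespace QnPaper

/-- The defining relations of the quadratic algebra `Q_n`:
for `A ⊆ {1,…,n}` and distinct `i, j ∉ A`,
`z_{A∪{i},j} + z_{A,i} = z_{A∪{j},i} + z_{A,j}` and
`z_{A∪{i},j} * z_{A,i} = z_{A∪{j},i} * z_{A,j}`. -/
inductive QRel (k : Type) [Field k] (n : ℕ) :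
    FreeAlgebra k (Finset (Fin n) × Fin n) → FreeAlgebra k (Finset (Fin n) × Fin n) → Prop
  | add_rel (A : Finset (Fin n)) (i j : Fin n) (hi : i ∉ A) (hj : j ∉ A) (hij : i ≠ j) :
      QRel k n (FreeAlgebra.ι k (insert i A, j) + FreeAlgebra.ι k (A, i))
        (FreeAlgebra.ι k (insert j A, i) + FreeAlgebra.ι k (A, j))
  | mul_rel (A : Finset (Fin n)) (i j : Fin n) (hi : i ∉ A) (hj : j ∉ A) (hij : i ≠ j) :
      QRel k n (FreeAlgebra.ι k (insert i A, j) * FreeAlgebra.ι k (A, i))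
        (FreeAlgebra.ι k (insert j A, i) * FreeAlgebra.ι k (A, j))

/-- The quadratic algebra `Q_n`. -/
abbrev Q (k : Type) [Field k] (n : ℕ) := RingQuot (QRel k n)

/-- The generator `z_{A,i}` of `Q_n` (only meaningful when `i ∉ A`). -/
def z (k : Type) [Field k] (n : ℕ) (A : Finset (Fin n)) (i : Fin n) : Q k n :=
  RingQuot.mkAlgHom k (QRel k n) (FreeAlgebra.ι k (A, i))

/-- `rAux s [i₁,…,i_r] = z_{s,i₁} + z_{s∪{i₁},i₂} + ⋯`. -/
def rAux (k : Type) [Field k] (n : ℕ) (s : Finset (Fin n)) : List (Fin n) → Q k n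
  | [] => 0
  | a :: l => z k n s a + rAux k n (insert a s) l

/-- `r(A) = z_{A,∅}`, computed using the increasing ordering of `A`. -/
def rFin (k : Type) [Field k] (n : ℕ) (A : Finset (Fin n)) : Q k n :=
  rAux k n ∅ (A.sort (· ≤ ·))

/-- `u(B) = z_{∅,B} = ∑_{D ⊆ B} (-1)^{|B|-|D|} r(D)`. -/
def uFin (k : Type) [Field k] (n : ℕ) (B : Finset (Fin n)) : Q k n :=
  ∑ D ∈ B.powerset, (-1 : Q k n) ^ (B.card - D.card) * rFin k n D

section Aux

variable {k : Type} [Field k] {n : ℕ}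

lemma zadd (A : Finset (Fin n)) (i j : Fin n) (hi : i ∉ A) (hj : j ∉ A) (hij : i ≠ j) :
    z k n (insert i A) j + z k n A i = z k n (insert j A) i + z k n A j := by
  have h := RingQuot.mkAlgHom_rel k (QRel.add_rel (k := k) (n := n) A i j hi hj hij)
  simpa only [map_add, z] using h

lemma zmul (A : Finset (Fin n)) (i j : Fin n) (hi : i ∉ A) (hj : j ∉ A) (hij : i ≠ j) :
    z k n (insert i A) j * z k n A i = z k n (insert j A) i * z k n A j := by
  have h := RingQuot.mkAlgHom_rel k (QRel.mul_rel (k := k) (n := n) A i j hi hj hij)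
  simpa only [map_mul, z] using h

lemma rAux_perm {l l' : List (Fin n)} (h : l.Perm l') :
    ∀ s : Finset (Fin n), l.Nodup → (∀ a ∈ l, a ∉ s) → rAux k n s l = rAux k n s l' := by
  induction h with
  | nil => intro s _ _; rfl
  | cons x h ih =>
      intro s hnd hs
      simp only [rAux]
      rw [ih (insert x s) (List.nodup_cons.1 hnd).2 ?_]
      intro a ha
      simp only [Finset.mem_insert, not_or]
      exact ⟨fun hax => (List.nodup_cons.1 hnd).1 (hax ▸ ha),
        hs a (List.mem_cons_of_mem _ ha)⟩
  | swap x y l =>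
      intro s hnd hs
      have hy : y ∉ s := hs y (by simp)
      have hx : x ∉ s := hs x (by simp)
      have hyx : y ≠ x := by
        intro hyx
        exact (List.nodup_cons.1 hnd).1 (by simp [hyx])
      simp only [rAux]
      rw [Finset.insert_comm, ← add_assoc, ← add_assoc,
        add_comm (z k n s y), add_comm (z k n s x), zadd s y x hy hx hyx]
  | trans h1 h2 ih1 ih2 =>
      intro s hnd hs
      rw [ih1 s hnd hs, ih2 s (h1.nodup hnd) (fun a ha => hs a (h1.mem_iff.2 ha))]

lemma rAux_append (l m : List (Fin n)) :
    ∀ s, rAux k n s (l ++ m)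
      = rAux k n s l + rAux k n (List.foldl (fun t a => insert a t) s l) m := by
  induction l with
  | nil => intro s; simp [rAux]
  | cons a l ih =>
      intro s
      simp only [List.cons_append, rAux, List.foldl_cons, List.append_eq]
      rw [ih (insert a s), add_assoc]

lemma foldl_insert_eq (l : List (Fin n)) :
    ∀ s : Finset (Fin n), List.foldl (fun t a => insert a t) s l = s ∪ l.toFinset := by
  induction l with
  | nil => intro s; simp
  | cons a l ih =>
      intro s
      simp only [List.foldl_cons, List.toFinset_cons]
      rw [ih]
      ext x
      simp only [Finset.mem_union, Finset.mem_insert]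
      tauto

lemma rFin_insert (A : Finset (Fin n)) (i : Fin n) (hi : i ∉ A) :
    rFin k n (insert i A) = rFin k n A + z k n A i := by
  have hperm : ((insert i A).sort (· ≤ ·)).Perm (A.sort (· ≤ ·) ++ [i]) :=
    ((Finset.sort_perm_toList _ _).trans
      ((Finset.toList_insert hi).trans
        ((Finset.sort_perm_toList A _).symm.cons i))).trans
      (List.perm_append_singleton _ _).symm
  have h1 : rFin k n (insert i A) = rAux k n ∅ (A.sort (· ≤ ·) ++ [i]) :=
    rAux_perm hperm ∅ (Finset.sort_nodup _ _) (by simp)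
  rw [h1, rAux_append, foldl_insert_eq]
  simp only [Finset.sort_toFinset, Finset.empty_union, rAux, add_zero]
  rfl

lemma neg_one_pow_powerset_sum (C : Finset (Fin n)) :
    (∑ E ∈ C.powerset, (-1 : Q k n) ^ E.card) = if C = ∅ then 1 else 0 := by
  have h := Finset.sum_powerset_neg_one_pow_card (x := C)
  have h2 : ((∑ E ∈ C.powerset, (-1 : ℤ) ^ E.card : ℤ) : Q k n)
      = ∑ E ∈ C.powerset, (-1 : Q k n) ^ E.card := by push_cast; rfl
  rw [← h2, h]
  split_ifs <;> simp

lemma sum_uFin (B : Finset (Fin n)) :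
    ∑ D ∈ B.powerset, uFin k n D = rFin k n B := by
  unfold uFin
  rw [Finset.sum_comm' (s := B.powerset) (t := fun D => D.powerset) (t' := B.powerset)
    (s' := fun C => B.powerset.filter (fun D => C ⊆ D))
    (by
      intro D C
      simp only [Finset.mem_powerset, Finset.mem_filter]
      constructor
      · rintro ⟨h1, h2⟩; exact ⟨⟨h1, h2⟩, h2.trans h1⟩
      · rintro ⟨⟨h1, h2⟩, _⟩; exact ⟨h1, h2⟩)]
  have hinner : ∀ C ∈ B.powerset,
      (∑ D ∈ B.powerset.filter (fun D => C ⊆ D),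
        (-1 : Q k n) ^ (D.card - C.card) * rFin k n C)
      = (if C = B then rFin k n C else 0) := by
    intro C hC
    rw [Finset.mem_powerset] at hC
    have hbij : (∑ D ∈ B.powerset.filter (fun D => C ⊆ D),
        (-1 : Q k n) ^ (D.card - C.card) * rFin k n C)
        = ∑ E ∈ (B \ C).powerset, (-1 : Q k n) ^ E.card * rFin k n C := by
      refine Finset.sum_nbij' (fun D => D \ C) (fun E => C ∪ E) ?_ ?_ ?_ ?_ ?_
      · intro D hD
        simp only [Finset.mem_filter, Finset.mem_powerset] at hD ⊢
        exact Finset.sdiff_subset_sdiff hD.1 Finset.Subset.rfl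
      · intro E hE
        simp only [Finset.mem_powerset, Finset.subset_sdiff] at hE
        simp only [Finset.mem_filter, Finset.mem_powerset]
        exact ⟨Finset.union_subset hC hE.1, Finset.subset_union_left⟩
      · intro D hD
        simp only [Finset.mem_filter, Finset.mem_powerset] at hD
        exact Finset.union_sdiff_of_subset hD.2
      · intro E hE
        simp only [Finset.mem_powerset, Finset.subset_sdiff] at hE
        exact Finset.union_sdiff_cancel_left hE.2.symm
      · intro D hD
        simp only [Finset.mem_filter, Finset.mem_powerset] at hD
        rw [Finset.card_sdiff_of_subset hD.2]
    rw [hbij, ← Finset.sum_mul, neg_one_pow_powerset_sum]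
    by_cases hCB : C = B
    · simp [hCB]
    · have : ¬ B \ C = ∅ := by
        rw [Finset.sdiff_eq_empty_iff_subset]
        intro hBC
        exact hCB (Finset.Subset.antisymm hC hBC)
      simp [this, hCB]
  rw [Finset.sum_congr rfl hinner, Finset.sum_ite_eq']
  simp

lemma filter_not_mem_powerset (B : Finset (Fin n)) (x : Fin n) :
    B.powerset.filter (fun D => x ∉ D) = (B.erase x).powerset := by
  ext D
  simp only [Finset.mem_filter, Finset.mem_powerset, Finset.subset_erase]

lemma sum_uFin_pair (B : Finset (Fin n)) (i j : Fin n) :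
    ∑ D ∈ B.powerset.filter (fun D => i ∈ D ∧ j ∈ D), uFin k n D
      = rFin k n B - rFin k n (B.erase i) - rFin k n (B.erase j)
        + rFin k n ((B.erase j).erase i) := by
  have h1 := Finset.sum_filter_add_sum_filter_not B.powerset (fun D => i ∈ D) (uFin k n)
  have h2 := Finset.sum_filter_add_sum_filter_not
    (B.powerset.filter (fun D => i ∈ D)) (fun D => j ∈ D) (uFin k n)
  have h3 := Finset.sum_filter_add_sum_filter_not
    ((B.erase j).powerset) (fun D => i ∈ D) (uFin k n)
  rw [Finset.filter_filter] at h2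
  have e1 : (B.powerset.filter (fun D => i ∈ D)).filter (fun D => ¬ j ∈ D)
      = (B.erase j).powerset.filter (fun D => i ∈ D) := by
    rw [Finset.filter_comm, filter_not_mem_powerset]
  have e2 : B.powerset.filter (fun D => ¬ i ∈ D) = (B.erase i).powerset :=
    filter_not_mem_powerset B i
  have e3 : (B.erase j).powerset.filter (fun D => ¬ i ∈ D)
      = ((B.erase j).erase i).powerset := filter_not_mem_powerset _ i
  rw [e1] at h2
  rw [e2] at h1
  rw [e3] at h3
  rw [sum_uFin] at h1
  rw [sum_uFin] at h1
  rw [sum_uFin, sum_uFin] at h3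
  linear_combination (norm := abel) h2 + h1 - h3

end Aux

/-- `[z_{A,i}, z_{A,j}] = ∑_{{i,j} ⊆ D ⊆ A∪{i,j}} u(D)·(z_{A,i} - z_{A,j})`. -/
theorem stmt10 (k : Type) [Field k] (n : ℕ) (A : Finset (Fin n)) (i j : Fin n)
    (hi : i ∉ A) (hj : j ∉ A) (hij : i ≠ j) :
    z k n A i * z k n A j - z k n A j * z k n A i
      = ∑ D ∈ (insert i (insert j A)).powerset.filter (fun D => i ∈ D ∧ j ∈ D),
          uFin k n D * (z k n A i - z k n A j) := by
  have hiB : i ∉ insert j A := by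
    simp only [Finset.mem_insert, not_or]
    exact ⟨hij, hi⟩
  have hsum : ∑ D ∈ (insert i (insert j A)).powerset.filter (fun D => i ∈ D ∧ j ∈ D),
      uFin k n D = z k n (insert j A) i - z k n A i := by
    rw [sum_uFin_pair _ i j]
    have he1 : (insert i (insert j A)).erase i = insert j A := Finset.erase_insert hiB
    have he2 : (insert i (insert j A)).erase j = insert i A := by
      rw [Finset.erase_insert_of_ne hij, Finset.erase_insert hj]
    have he3 : (insert i A).erase i = A := Finset.erase_insert hi
    rw [he1, he2, he3]
    rw [rFin_insert (insert j A) i hiB, rFin_insert A i hi]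
    abel
  rw [← Finset.sum_mul, hsum]
  have hadd := zadd (k := k) A i j hi hj hij
  have hmul := zmul (k := k) A i j hi hj hij
  revert hadd hmul
  generalize z k n (insert i A) j = a
  generalize z k n (insert j A) i = e
  generalize z k n A i = b
  generalize z k n A j = c
  intro hadd hmul
  have he : e = a + b - c := eq_sub_of_add_eq hadd.symm
  subst he
  have h2 : a * b = a * c + b * c - c * c := by rw [hmul, sub_mul, add_mul]
  have h4 : a + b - c - b = a - c := by abel
  have h3 : (a + b - c - b) * (b - c) = a * b - a * c - c * b + c * c := by
    rw [h4, sub_mul, mul_sub, mul_sub]; abel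
  rw [h3, h2]
  abel
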